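/- Let $\{u_j\}_{j=0}^{2l-1}$ be a Chebyshev set on $[a,b]$ and suppose points $a < t_1 < \cdots < t_l < b$ and weights $\lambda_1,\ldots,\lambda_l > 0$ satisfy the exactness conditions $\sum_{i=1}^l \lambda_i u_j(t_i) = \int_a^b u_j(t)\,w(t)\,dt$ for $j=0,\ldots,2l-1$, where $w > 0$ is a continuous weight. Then the points and weights are unique: any other set of $l$ interior points and positive weights satisfying the same conditions coincides with it. -/

import Mathlib

/-- Uniqueness of the generalized Gaussian quadrature rule: for a Chebyshev set
of size `2l` and a positive continuous weight, any two `l`-point quadrature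
rules with interior points and positive weights that are exact on the set
coincide. -/
theorem generalized_gauss_unique
    (l : ℕ) (a b : ℝ) (hab : a < b) (u : Fin (2 * l) → ℝ → ℝ)
    (hcont : ∀ j, ContinuousOn (u j) (Set.Icc a b))
    (hcheb : ∀ c : Fin (2 * l) → ℝ, c ≠ 0 →
      ∀ t : Fin (2 * l) → ℝ, StrictMono t → (∀ i, t i ∈ Set.Icc a b) →
        ¬ (∀ i, ∑ j, c j * u j (t i) = 0))
    (w : ℝ → ℝ) (hw : ContinuousOn w (Set.Icc a b))
    (hwpos : ∀ x ∈ Set.Icc a b, 0 < w x)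
    (t : Fin l → ℝ) (lam : Fin l → ℝ)
    (ht : StrictMono t) (htab : ∀ i, t i ∈ Set.Ioo a b) (hlam : ∀ i, 0 < lam i)
    (hexact : ∀ j, ∑ i, lam i * u j (t i) = ∫ x in Set.Icc a b, u j x * w x)
    (s : Fin l → ℝ) (mu : Fin l → ℝ)
    (hs : StrictMono s) (hsab : ∀ i, s i ∈ Set.Ioo a b) (hmu : ∀ i, 0 < mu i)
    (hexact' : ∀ j, ∑ i, mu i * u j (s i) = ∫ x in Set.Icc a b, u j x * w x) :
    t = s ∧ lam = mu := by
  classical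
  -- the finite set of all nodes, padded to exactly `2*l` points inside `(a,b)`
  set T0 : Finset ℝ := Finset.image t Finset.univ ∪ Finset.image s Finset.univ with hT0
  have hT0sub : ↑T0 ⊆ Set.Ioo a b := by
    intro p hp
    simp only [hT0, Finset.coe_union, Set.mem_union, Finset.coe_image,
      Set.mem_image, Finset.coe_univ, Set.image_univ, Set.mem_range] at hp
    rcases hp with ⟨i, rfl⟩ | ⟨i, rfl⟩
    · exact htab i
    · exact hsab i
  have hT0card : T0.card ≤ 2 * l := by
    calc T0.card ≤ (Finset.image t Finset.univ).card + (Finset.image s Finset.univ).card :=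
          Finset.card_union_le _ _
    _ ≤ l + l := by
          refine add_le_add (le_trans (Finset.card_image_le) ?_)
            (le_trans (Finset.card_image_le) ?_) <;> simp
    _ = 2 * l := by ring
  have hinf : (Set.Ioo a b \ ↑T0).Infinite :=
    (Set.Ioo_infinite hab).diff T0.finite_toSet
  obtain ⟨T1, hT1sub, hT1card⟩ := hinf.exists_subset_card_eq (2 * l - T0.card)
  set T : Finset ℝ := T0 ∪ T1 with hT
  have hdisj : Disjoint T0 T1 := by
    rw [Finset.disjoint_left]
    intro p hp hp1
    exact (hT1sub hp1).2 hp
  have hTcard : T.card = 2 * l := by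
    rw [hT, Finset.card_union_of_disjoint hdisj, hT1card]
    omega
  have hTsub : ↑T ⊆ Set.Ioo a b := by
    intro p hp
    rcases Finset.mem_union.1 hp with h | h
    exacts [hT0sub h, (hT1sub h).1]
  set x : Fin (2 * l) → ℝ := fun i => T.orderEmbOfFin hTcard i with hx
  have hxmono : StrictMono x := (T.orderEmbOfFin hTcard).strictMono
  have hxmem : ∀ i, x i ∈ T := fun i => Finset.orderEmbOfFin_mem T hTcard i
  have hxIcc : ∀ i, x i ∈ Set.Icc a b := fun i => Set.Ioo_subset_Icc_self (hTsub (hxmem i))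
  -- the evaluation linear map at the points `x i`
  let φ : (Fin (2 * l) → ℝ) →ₗ[ℝ] (Fin (2 * l) → ℝ) :=
    { toFun := fun c i => ∑ j, c j * u j (x i)
      map_add' := by
        intro c d; funext i
        simp [add_mul, Finset.sum_add_distrib]
      map_smul' := by
        intro r c; funext i
        simp [Finset.mul_sum, mul_assoc] }
  have hinj : Function.Injective φ := by
    rw [← LinearMap.ker_eq_bot, LinearMap.ker_eq_bot']
    intro c hc
    by_contra hc0
    exact hcheb c hc0 x hxmono hxIcc (fun i => congrFun hc i)
  -- the net mass at a point
  set net : ℝ → ℝ := fun p =>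
    (∑ i ∈ Finset.univ.filter (fun i => t i = p), lam i)
      - ∑ i ∈ Finset.univ.filter (fun i => s i = p), mu i with hnet
  obtain ⟨c, hc⟩ := (LinearMap.injective_iff_surjective.mp hinj) (fun i => net (x i))
  set f : ℝ → ℝ := fun y => ∑ j, c j * u j y with hf
  have hfx : ∀ p ∈ T, f p = net p := by
    intro p hp
    have hrange : (p : ℝ) ∈ Set.range (T.orderEmbOfFin hTcard) := by
      rw [Finset.range_orderEmbOfFin]
      exact_mod_cast hp
    obtain ⟨i, rfl⟩ := hrange
    exact congrFun hc i
  -- exactness implies the combined rule annihilates f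
  have h1 : ∀ (v : Fin l → ℝ) (y : Fin l → ℝ),
      ∑ i, v i * f (y i) = ∑ j, c j * ∑ i, v i * u j (y i) := by
    intro v y
    simp only [hf, Finset.mul_sum]
    rw [Finset.sum_comm]
    exact Finset.sum_congr rfl fun j _ => Finset.sum_congr rfl fun i _ => by ring
  have hA : ∑ i, lam i * f (t i) - ∑ i, mu i * f (s i) = 0 := by
    rw [h1 lam t, h1 mu s]
    refine sub_eq_zero.2 (Finset.sum_congr rfl fun j _ => ?_)
    rw [hexact j, hexact' j]
  -- regroup by node
  have hmapsT : ∀ i ∈ Finset.univ, t i ∈ T := fun i _ =>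
    Finset.mem_union_left _ (Finset.mem_union_left _ (Finset.mem_image_of_mem t (Finset.mem_univ i)))
  have hmapsS : ∀ i ∈ Finset.univ, s i ∈ T := fun i _ =>
    Finset.mem_union_left _ (Finset.mem_union_right _ (Finset.mem_image_of_mem s (Finset.mem_univ i)))
  have hsum_t : ∑ i, lam i * f (t i)
      = ∑ p ∈ T, (∑ i ∈ Finset.univ.filter (fun i => t i = p), lam i) * f p := by
    rw [← Finset.sum_fiberwise_of_maps_to hmapsT (fun i => lam i * f (t i))]
    refine Finset.sum_congr rfl fun p _ => ?_
    rw [Finset.sum_mul]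
    refine Finset.sum_congr rfl fun i hi => ?_
    rw [(Finset.mem_filter.1 hi).2]
  have hsum_s : ∑ i, mu i * f (s i)
      = ∑ p ∈ T, (∑ i ∈ Finset.univ.filter (fun i => s i = p), mu i) * f p := by
    rw [← Finset.sum_fiberwise_of_maps_to hmapsS (fun i => mu i * f (s i))]
    refine Finset.sum_congr rfl fun p _ => ?_
    rw [Finset.sum_mul]
    refine Finset.sum_congr rfl fun i hi => ?_
    rw [(Finset.mem_filter.1 hi).2]
  have hsq : ∑ p ∈ T, net p * net p = 0 := by
    rw [hsum_t, hsum_s, ← Finset.sum_sub_distrib] at hA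
    rw [← hA]
    refine Finset.sum_congr rfl fun p hp => ?_
    rw [hfx p hp, hnet]
    ring
  have hnet0 : ∀ p ∈ T, net p = 0 := by
    intro p hp
    have := (Finset.sum_eq_zero_iff_of_nonneg
      (fun q _ => mul_self_nonneg (net q))).1 hsq p hp
    exact mul_self_eq_zero.1 this
  have key : ∀ p ∈ T, ∑ i ∈ Finset.univ.filter (fun i => t i = p), lam i
      = ∑ i ∈ Finset.univ.filter (fun i => s i = p), mu i :=
    fun p hp => sub_eq_zero.1 (hnet0 p hp)
  have hfib_t : ∀ k, Finset.univ.filter (fun i => t i = t k) = {k} := by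
    intro k; ext i; simp [ht.injective.eq_iff]
  have hfib_s : ∀ k, Finset.univ.filter (fun i => s i = s k) = {k} := by
    intro k; ext i; simp [hs.injective.eq_iff]
  -- the ranges coincide
  have hts : ∀ k, ∃ i, s i = t k := by
    intro k
    by_contra h
    push_neg at h
    have h0 : Finset.univ.filter (fun i => s i = t k) = ∅ := by
      ext i; simp [h i]
    have hk := key (t k) (hmapsT k (Finset.mem_univ k))
    rw [hfib_t k, h0] at hk
    simp at hk
    exact (hlam k).ne' hk
  have hst : ∀ k, ∃ i, t i = s k := by
    intro k
    by_contra h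
    push_neg at h
    have h0 : Finset.univ.filter (fun i => t i = s k) = ∅ := by
      ext i; simp [h i]
    have hk := key (s k) (hmapsS k (Finset.mem_univ k))
    rw [hfib_s k, h0] at hk
    simp at hk
    exact (hmu k).ne hk
  have hrange_eq : Set.range t = Set.range s := by
    apply Set.Subset.antisymm
    · rintro p ⟨k, rfl⟩
      obtain ⟨i, hi⟩ := hts k
      exact ⟨i, hi⟩
    · rintro p ⟨k, rfl⟩
      obtain ⟨i, hi⟩ := hst k
      exact ⟨i, hi⟩
  have hwf : WellFoundedLT (Fin l) := inferInstance
  have hteq : t = s :=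
    (@StrictMono.range_inj (Fin l) ℝ Fin.instLinearOrder Real.instPreorder hwf t s ht hs).1
      hrange_eq
  subst hteq
  refine ⟨rfl, funext fun k => ?_⟩
  have hk := key (t k) (hmapsT k (Finset.mem_univ k))
  rwa [hfib_t k, Finset.sum_singleton, Finset.sum_singleton] at hk
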